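/- Let P and Q be probability distributions on a finite product space over variables indexed by V, and let A, B, C ⊆ V be pairwise disjoint with A, B nonempty. Suppose Q satisfies the conditional independence X_A ⫫ X_B | X_C. Then the inner product ⟨u_{⟨A,B|C⟩}, KL(P‖Q)⟩ := KL(P_{ABC}‖Q_{ABC}) − KL(P_{AC}‖Q_{AC}) − KL(P_{BC}‖Q_{BC}) + KL(P_C‖Q_C) equals the expected conditional mutual information E_{P_C}[I_P(A;B|C)], and hence is nonnegative; it is zero iff P also satisfies X_A ⫫ X_B | X_C. -/
import Mathlib


open Finset

variable {V : Type*} [Fintype V] [DecidableEq V]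

/-- Marginal of `p` on coordinates `S`, evaluated at (the `S`-coordinates of) `ω`. -/
noncomputable def marg {X : V → Type*} [∀ i, Fintype (X i)] [∀ i, DecidableEq (X i)]
    (p : (∀ i, X i) → ℝ) (S : Finset V) (ω : ∀ i, X i) : ℝ :=
  ∑ τ : ∀ i, X i, if ∀ i ∈ S, τ i = ω i then p τ else 0

/-- Kullback–Leibler divergence between the `S`-marginals of `p` and `q`. -/
noncomputable def klMarg {X : V → Type*} [∀ i, Fintype (X i)] [∀ i, DecidableEq (X i)]
    (p q : (∀ i, X i) → ℝ) (S : Finset V) : ℝ :=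
  ∑ ω : ∀ i, X i, p ω * Real.log (marg p S ω / marg q S ω)

/-- `p` satisfies the conditional independence `X_A ⫫ X_B | X_C`. -/
def CondIndep {X : V → Type*} [∀ i, Fintype (X i)] [∀ i, DecidableEq (X i)]
    (p : (∀ i, X i) → ℝ) (A B C : Finset V) : Prop :=
  ∀ ω : ∀ i, X i, 0 < marg p C ω →
    marg p (A ∪ B ∪ C) ω * marg p C ω = marg p (A ∪ C) ω * marg p (B ∪ C) ω

/-- Expected conditional mutual information `E_{P_C}[I_P(A;B|C)]`. -/
noncomputable def cmi {X : V → Type*} [∀ i, Fintype (X i)] [∀ i, DecidableEq (X i)]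
    (p : (∀ i, X i) → ℝ) (A B C : Finset V) : ℝ :=
  ∑ ω : ∀ i, X i, p ω *
    Real.log ((marg p (A ∪ B ∪ C) ω * marg p C ω) / (marg p (A ∪ C) ω * marg p (B ∪ C) ω))

section Aux
variable {X : V → Type*} [∀ i, Fintype (X i)] [∀ i, DecidableEq (X i)]

def agr (S : Finset V) (ω : ∀ i, X i) : Finset (∀ i, X i) :=
  univ.filter fun τ => ∀ i ∈ S, τ i = ω i

lemma mem_agr {S : Finset V} {τ ω : ∀ i, X i} : τ ∈ agr S ω ↔ ∀ i ∈ S, τ i = ω i := by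
  simp [agr]

lemma agr_comm {S : Finset V} {τ ω : ∀ i, X i} : τ ∈ agr S ω ↔ ω ∈ agr S τ := by
  simp only [mem_agr]
  exact ⟨fun h i hi => (h i hi).symm, fun h i hi => (h i hi).symm⟩

lemma self_mem_agr {S : Finset V} {ω : ∀ i, X i} : ω ∈ agr S ω := mem_agr.2 fun _ _ => rfl

lemma agr_eq_of_mem {S : Finset V} {τ ω : ∀ i, X i} (h : τ ∈ agr S ω) : agr S τ = agr S ω := by
  ext σ
  simp only [mem_agr] at *
  exact ⟨fun h' i hi => (h' i hi).trans (h i hi), fun h' i hi => (h' i hi).trans (h i hi).symm⟩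

lemma agr_mono {S T : Finset V} (hST : S ⊆ T) {ω : ∀ i, X i} : agr T ω ⊆ agr S ω :=
  fun τ hτ => mem_agr.2 fun i hi => mem_agr.1 hτ i (hST hi)

lemma marg_eq_sum (p : (∀ i, X i) → ℝ) (S : Finset V) (ω : ∀ i, X i) :
    marg p S ω = ∑ τ ∈ agr S ω, p τ := (sum_filter _ _).symm

lemma marg_nonneg {p : (∀ i, X i) → ℝ} (hp : ∀ ω, 0 ≤ p ω) (S : Finset V) (ω : ∀ i, X i) :
    0 ≤ marg p S ω := by
  rw [marg_eq_sum]; exact sum_nonneg fun τ _ => hp τ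

lemma le_marg {p : (∀ i, X i) → ℝ} (hp : ∀ ω, 0 ≤ p ω) (S : Finset V) (ω : ∀ i, X i) :
    p ω ≤ marg p S ω := by
  rw [marg_eq_sum]; exact single_le_sum (fun τ _ => hp τ) self_mem_agr

lemma marg_mono {p : (∀ i, X i) → ℝ} (hp : ∀ ω, 0 ≤ p ω) {S T : Finset V} (hST : S ⊆ T)
    (ω : ∀ i, X i) : marg p T ω ≤ marg p S ω := by
  rw [marg_eq_sum, marg_eq_sum]
  exact sum_le_sum_of_subset_of_nonneg (agr_mono hST) fun τ _ _ => hp τ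

lemma marg_local {p : (∀ i, X i) → ℝ} {S : Finset V} {τ ω : ∀ i, X i} (h : τ ∈ agr S ω) :
    marg p S τ = marg p S ω := by rw [marg_eq_sum, marg_eq_sum, agr_eq_of_mem h]

def ovr (S : Finset V) (ω σ : ∀ i, X i) : ∀ i, X i := fun i => if i ∈ S then ω i else σ i

lemma card_agr_const (S : Finset V) (τ ω : ∀ i, X i) : (agr S τ).card = (agr S ω).card := by
  apply card_bij' (fun σ _ => ovr S ω σ) (fun σ _ => ovr S τ σ)
  · intro σ _
    exact mem_agr.2 fun i hi => by simp [ovr, hi]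
  · intro σ _
    exact mem_agr.2 fun i hi => by simp [ovr, hi]
  · intro σ hσ
    funext i
    by_cases hi : i ∈ S
    · simp [ovr, hi, mem_agr.1 hσ i hi]
    · simp [ovr, hi]
  · intro σ hσ
    funext i
    by_cases hi : i ∈ S
    · simp [ovr, hi, mem_agr.1 hσ i hi]
    · simp [ovr, hi]

lemma agr_inter_of_consistent {S T : Finset V} {τ σ : ∀ i, X i}
    (h : ∀ i ∈ S ∩ T, τ i = σ i) :
    agr S τ ∩ agr T σ = agr (S ∪ T) (ovr S τ σ) := by
  ext ρ
  simp only [mem_inter, mem_agr, mem_union, ovr]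
  constructor
  · rintro ⟨h1, h2⟩ i hi
    by_cases hiS : i ∈ S
    · simp [hiS, h1 i hiS]
    · simp only [hiS, if_false]
      exact h2 i (hi.resolve_left hiS)
  · intro hρ
    constructor
    · intro i hiS
      have := hρ i (Or.inl hiS)
      simpa [hiS] using this
    · intro i hiT
      have := hρ i (Or.inr hiT)
      by_cases hiS : i ∈ S
      · simp only [hiS, if_true] at this
        exact this.trans (h i (mem_inter.2 ⟨hiS, hiT⟩))
      · simpa [hiS] using this

lemma agr_inter_of_inconsistent {S T : Finset V} {τ σ : ∀ i, X i}
    {i : V} (hiS : i ∈ S) (hiT : i ∈ T) (h : τ i ≠ σ i) :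
    agr S τ ∩ agr T σ = ∅ := by
  ext ρ
  simp only [mem_inter, mem_agr, notMem_empty, iff_false, not_and]
  intro h1 h2
  exact h ((h1 i hiS).symm.trans (h2 i hiT)) |>.elim

lemma sum_agr_comm (g : (∀ i, X i) → (∀ i, X i) → ℝ) (S : Finset V) :
    ∑ ω : ∀ i, X i, ∑ τ ∈ agr S ω, g ω τ = ∑ τ : ∀ i, X i, ∑ ω ∈ agr S τ, g ω τ := by
  simp only [agr, sum_filter]
  rw [Finset.sum_comm]
  refine sum_congr rfl fun τ _ => sum_congr rfl fun ω _ => ?_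
  exact if_congr ⟨fun h i hi => (h i hi).symm, fun h i hi => (h i hi).symm⟩ rfl rfl

lemma sum_marg_mul (p f : (∀ i, X i) → ℝ) (S : Finset V) :
    ∑ ω : ∀ i, X i, marg p S ω * f ω = ∑ τ : ∀ i, X i, p τ * ∑ ω ∈ agr S τ, f ω := by
  simp only [marg_eq_sum, sum_mul]
  rw [sum_agr_comm (fun ω τ => p τ * f ω) S]
  simp only [mul_sum]

lemma sum_marg_mul_local (p f : (∀ i, X i) → ℝ) (S : Finset V)
    (hf : ∀ {τ ω : ∀ i, X i}, τ ∈ agr S ω → f τ = f ω) (ω₀ : ∀ i, X i) :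
    ∑ ω : ∀ i, X i, marg p S ω * f ω
      = ((agr S ω₀).card : ℝ) * ∑ τ : ∀ i, X i, p τ * f τ := by
  rw [sum_marg_mul, mul_sum]
  refine sum_congr rfl fun τ _ => ?_
  have h1 : ∑ ω ∈ agr S τ, f ω = ((agr S τ).card : ℝ) * f τ := by
    rw [sum_congr rfl fun ω hω => hf hω, sum_const, nsmul_eq_mul]
  rw [h1, card_agr_const S τ ω₀]
  ring

lemma sum_agr_marg (p : (∀ i, X i) → ℝ) (A B C : Finset V)
    (hAB : Disjoint A B) (hAC : Disjoint A C) (hBC : Disjoint B C) (τ ω₀ : ∀ i, X i) :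
    ∑ ω ∈ agr (A ∪ C) τ, marg p (B ∪ C) ω
      = ((agr (A ∪ B ∪ C) ω₀).card : ℝ) * marg p C τ := by
  have hABC : (A ∪ C) ∪ (B ∪ C) = A ∪ B ∪ C := by
    ext i; simp [mem_union]; tauto
  have hint : (A ∪ C) ∩ (B ∪ C) = C := by
    ext i
    simp only [mem_inter, mem_union]
    constructor
    · rintro ⟨hi1, hi2⟩
      rcases hi1 with h1 | h1
      · rcases hi2 with h2 | h2
        · exact absurd h2 (Finset.disjoint_left.1 hAB h1)
        · exact absurd h2 (Finset.disjoint_left.1 hAC h1)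
      · exact h1
    · intro h
      exact ⟨Or.inr h, Or.inr h⟩
  have key : ∀ σ : ∀ i, X i,
      ((agr (A ∪ C) τ ∩ agr (B ∪ C) σ).card : ℝ)
        = if ∀ i ∈ C, σ i = τ i then ((agr (A ∪ B ∪ C) ω₀).card : ℝ) else 0 := by
    intro σ
    by_cases hcons : ∀ i ∈ C, σ i = τ i
    · rw [if_pos hcons]
      have h' : ∀ i ∈ (A ∪ C) ∩ (B ∪ C), τ i = σ i := by
        rw [hint]; exact fun i hi => (hcons i hi).symm
      rw [agr_inter_of_consistent h', hABC, card_agr_const _ _ ω₀]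
    · rw [if_neg hcons]
      push_neg at hcons
      obtain ⟨i, hiC, hne⟩ := hcons
      rw [agr_inter_of_inconsistent (mem_union_right A hiC) (mem_union_right B hiC)
        (fun h => hne h.symm)]
      simp
  -- expand marg as a filtered sum, swap
  have expand : ∑ ω ∈ agr (A ∪ C) τ, marg p (B ∪ C) ω
      = ∑ σ : ∀ i, X i, p σ * ((agr (A ∪ C) τ ∩ agr (B ∪ C) σ).card : ℝ) := by
    simp only [marg]
    rw [Finset.sum_comm]
    refine sum_congr rfl fun σ _ => ?_
    have h2 : ∑ ω ∈ agr (A ∪ C) τ, (if ∀ i ∈ B ∪ C, σ i = ω i then p σ else 0)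
        = ∑ ω ∈ agr (A ∪ C) τ ∩ agr (B ∪ C) σ, p σ := by
      rw [← sum_filter]
      congr 1
      ext ω
      simp only [mem_filter, mem_inter, mem_agr]
      constructor
      · rintro ⟨h1, h2⟩; exact ⟨h1, fun i hi => (h2 i hi).symm⟩
      · rintro ⟨h1, h2⟩; exact ⟨h1, fun i hi => (h2 i hi).symm⟩
    rw [h2, sum_const, nsmul_eq_mul, mul_comm]
  rw [expand, marg, mul_sum]
  refine sum_congr rfl fun σ _ => ?_
  rw [key σ]
  split_ifs with h
  · ring
  · simp

/-- the local ratio `h`. -/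
noncomputable def rat (P : (∀ i, X i) → ℝ) (A B C : Finset V) (ω : ∀ i, X i) : ℝ :=
  (marg P (A ∪ C) ω * marg P (B ∪ C) ω) / (marg P (A ∪ B ∪ C) ω * marg P C ω)

/-- the function `u`. -/
noncomputable def urat (P : (∀ i, X i) → ℝ) (A B C : Finset V) (ω : ∀ i, X i) : ℝ :=
  marg P (A ∪ C) ω * marg P (B ∪ C) ω / marg P C ω

end Aux

theorem stmt8 {X : V → Type*} [∀ i, Fintype (X i)] [∀ i, DecidableEq (X i)]
    (P Q : (∀ i, X i) → ℝ)
    (hP0 : ∀ ω, 0 ≤ P ω) (hP1 : ∑ ω : ∀ i, X i, P ω = 1)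
    (hQ0 : ∀ ω, 0 ≤ Q ω) (hQ1 : ∑ ω : ∀ i, X i, Q ω = 1)
    (habs : ∀ ω, 0 < P ω → 0 < Q ω)
    (A B C : Finset V) (hA : A.Nonempty) (hB : B.Nonempty)
    (hAB : Disjoint A B) (hAC : Disjoint A C) (hBC : Disjoint B C)
    (hQCI : CondIndep Q A B C) :
    klMarg P Q (A ∪ B ∪ C) - klMarg P Q (A ∪ C) - klMarg P Q (B ∪ C) + klMarg P Q C
        = cmi P A B C ∧
      0 ≤ cmi P A B C ∧
      (cmi P A B C = 0 ↔ CondIndep P A B C) := by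
  classical
  have hne : Nonempty (∀ i, X i) := by
    by_contra h
    rw [not_nonempty_iff] at h
    rw [Finset.univ_eq_empty, Finset.sum_empty] at hP1
    exact one_ne_zero hP1.symm
  obtain ⟨ω₀⟩ := hne
  set N : ℝ := ((agr (A ∪ B ∪ C) ω₀).card : ℝ) with hNdef
  have hNpos : 0 < N := by
    have hmem : ω₀ ∈ agr (A ∪ B ∪ C) ω₀ := self_mem_agr
    rw [hNdef]
    exact_mod_cast Nat.cast_pos.2 (Finset.card_pos.2 ⟨ω₀, hmem⟩)
  have sAC : A ∪ C ⊆ A ∪ B ∪ C :=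
    union_subset (subset_union_left.trans subset_union_left) subset_union_right
  have sBC : B ∪ C ⊆ A ∪ B ∪ C :=
    union_subset (subset_union_right.trans subset_union_left) subset_union_right
  have sC : C ⊆ A ∪ B ∪ C := subset_union_right
  have sCAC : C ⊆ A ∪ C := subset_union_right
  have posP : ∀ (S : Finset V) (ω : ∀ i, X i), 0 < P ω → 0 < marg P S ω :=
    fun S ω h => lt_of_lt_of_le h (le_marg hP0 S ω)
  have posQ : ∀ (S : Finset V) (ω : ∀ i, X i), 0 < P ω → 0 < marg Q S ω :=
    fun S ω h => lt_of_lt_of_le (habs ω h) (le_marg hQ0 S ω)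
  -- Part 1
  have part1 : klMarg P Q (A ∪ B ∪ C) - klMarg P Q (A ∪ C) - klMarg P Q (B ∪ C) + klMarg P Q C
      = cmi P A B C := by
    rw [klMarg, klMarg, klMarg, klMarg, cmi, ← sum_sub_distrib, ← sum_sub_distrib,
      ← sum_add_distrib]
    refine sum_congr rfl fun ω _ => ?_
    rcases (hP0 ω).eq_or_lt with h0 | hpos
    · simp [← h0]
    · have pABC := posP (A ∪ B ∪ C) ω hpos
      have pAC := posP (A ∪ C) ω hpos
      have pBC := posP (B ∪ C) ω hpos
      have pC := posP C ω hpos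
      have qABC := posQ (A ∪ B ∪ C) ω hpos
      have qAC := posQ (A ∪ C) ω hpos
      have qBC := posQ (B ∪ C) ω hpos
      have qC := posQ C ω hpos
      have hQeq : marg Q (A ∪ B ∪ C) ω * marg Q C ω = marg Q (A ∪ C) ω * marg Q (B ∪ C) ω :=
        hQCI ω qC
      have hlogQ : Real.log (marg Q (A ∪ B ∪ C) ω) + Real.log (marg Q C ω)
          = Real.log (marg Q (A ∪ C) ω) + Real.log (marg Q (B ∪ C) ω) := by
        rw [← Real.log_mul (ne_of_gt qABC) (ne_of_gt qC),
          ← Real.log_mul (ne_of_gt qAC) (ne_of_gt qBC), hQeq]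
      have key : Real.log (marg P (A ∪ B ∪ C) ω / marg Q (A ∪ B ∪ C) ω)
            - Real.log (marg P (A ∪ C) ω / marg Q (A ∪ C) ω)
            - Real.log (marg P (B ∪ C) ω / marg Q (B ∪ C) ω)
            + Real.log (marg P C ω / marg Q C ω)
          = Real.log ((marg P (A ∪ B ∪ C) ω * marg P C ω)
              / (marg P (A ∪ C) ω * marg P (B ∪ C) ω)) := by
        rw [Real.log_div (ne_of_gt pABC) (ne_of_gt qABC),
          Real.log_div (ne_of_gt pAC) (ne_of_gt qAC),
          Real.log_div (ne_of_gt pBC) (ne_of_gt qBC),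
          Real.log_div (ne_of_gt pC) (ne_of_gt qC),
          Real.log_div (by positivity) (by positivity),
          Real.log_mul (ne_of_gt pABC) (ne_of_gt pC),
          Real.log_mul (ne_of_gt pAC) (ne_of_gt pBC)]
        linarith
      linear_combination P ω * key
  -- locality of rat
  have hlocal : ∀ {τ ω : ∀ i, X i}, τ ∈ agr (A ∪ B ∪ C) ω → rat P A B C τ = rat P A B C ω := by
    intro τ ω hτ
    unfold rat
    rw [marg_local (agr_mono sAC hτ), marg_local (agr_mono sBC hτ),
      marg_local (agr_mono sC hτ), marg_local hτ]
  have hT : ∑ ω : ∀ i, X i, marg P (A ∪ B ∪ C) ω * rat P A B C ω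
      = N * ∑ ω : ∀ i, X i, P ω * rat P A B C ω :=
    sum_marg_mul_local P (rat P A B C) (A ∪ B ∪ C) hlocal ω₀
  have heqABC : ∀ ω, marg P (A ∪ B ∪ C) ω ≠ 0 →
      marg P (A ∪ B ∪ C) ω * rat P A B C ω = urat P A B C ω := by
    intro ω hm
    unfold rat urat
    by_cases hc : marg P C ω = 0
    · rw [hc]; simp
    · rw [← mul_div_assoc, mul_div_mul_left _ _ hm]
  have hle : ∀ ω, marg P (A ∪ B ∪ C) ω * rat P A B C ω ≤ urat P A B C ω := by
    intro ω
    rcases eq_or_ne (marg P (A ∪ B ∪ C) ω) 0 with hz | hz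
    · rw [hz, zero_mul]
      exact div_nonneg (mul_nonneg (marg_nonneg hP0 _ _) (marg_nonneg hP0 _ _))
        (marg_nonneg hP0 _ _)
    · exact le_of_eq (heqABC ω hz)
  have hU : ∑ ω : ∀ i, X i, urat P A B C ω = N := by
    have step1 : ∑ ω : ∀ i, X i, urat P A B C ω
        = ∑ τ : ∀ i, X i, P τ * ∑ ω ∈ agr (A ∪ C) τ, (marg P (B ∪ C) ω / marg P C ω) := by
      rw [← sum_marg_mul P (fun ω => marg P (B ∪ C) ω / marg P C ω) (A ∪ C)]
      refine sum_congr rfl fun ω _ => ?_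
      unfold urat
      rw [mul_div_assoc]
    rw [step1]
    have step2 : ∀ τ : ∀ i, X i,
        P τ * ∑ ω ∈ agr (A ∪ C) τ, (marg P (B ∪ C) ω / marg P C ω) = P τ * N := by
      intro τ
      rcases (hP0 τ).eq_or_lt with h0 | hpos
      · rw [← h0, zero_mul, zero_mul]
      · congr 1
        have hC : 0 < marg P C τ := posP C τ hpos
        have inner : ∑ ω ∈ agr (A ∪ C) τ, (marg P (B ∪ C) ω / marg P C ω)
            = (∑ ω ∈ agr (A ∪ C) τ, marg P (B ∪ C) ω) / marg P C τ := by
          rw [sum_div]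
          exact sum_congr rfl fun ω hω => by rw [marg_local (agr_mono sCAC hω)]
        rw [inner, sum_agr_marg P A B C hAB hAC hBC τ ω₀]
        exact mul_div_cancel_right₀ N (ne_of_gt hC)
    rw [sum_congr rfl fun τ _ => step2 τ, ← sum_mul, hP1, one_mul]
  have hTle : ∑ ω : ∀ i, X i, P ω * rat P A B C ω ≤ 1 := by
    have hh : N * (∑ ω : ∀ i, X i, P ω * rat P A B C ω) ≤ N * 1 := by
      rw [← hT, mul_one, ← hU]
      exact sum_le_sum fun ω _ => hle ω
    exact le_of_mul_le_mul_left hh hNpos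
  have hptle : ∀ ω, P ω * (1 - rat P A B C ω)
      ≤ P ω * Real.log ((marg P (A ∪ B ∪ C) ω * marg P C ω)
          / (marg P (A ∪ C) ω * marg P (B ∪ C) ω)) := by
    intro ω
    rcases (hP0 ω).eq_or_lt with h0 | hpos
    · rw [← h0, zero_mul, zero_mul]
    · refine mul_le_mul_of_nonneg_left ?_ (hP0 ω)
      have pABC := posP (A ∪ B ∪ C) ω hpos
      have pAC := posP (A ∪ C) ω hpos
      have pBC := posP (B ∪ C) ω hpos
      have pC := posP C ω hpos
      have hh : 0 < rat P A B C ω := div_pos (mul_pos pAC pBC) (mul_pos pABC pC)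
      have hg : (marg P (A ∪ B ∪ C) ω * marg P C ω)
          / (marg P (A ∪ C) ω * marg P (B ∪ C) ω) = (rat P A B C ω)⁻¹ := by
        unfold rat; rw [inv_div]
      rw [hg, Real.log_inv]
      have := Real.log_le_sub_one_of_pos hh
      linarith
  have hsum1h : ∑ ω : ∀ i, X i, P ω * (1 - rat P A B C ω)
      = 1 - ∑ ω : ∀ i, X i, P ω * rat P A B C ω := by
    simp only [mul_sub, mul_one]
    rw [sum_sub_distrib, hP1]
  have hlb : 1 - ∑ ω : ∀ i, X i, P ω * rat P A B C ω ≤ cmi P A B C := by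
    rw [cmi, ← hsum1h]
    exact sum_le_sum fun ω _ => hptle ω
  have nonneg : 0 ≤ cmi P A B C := le_trans (by linarith) hlb
  refine ⟨part1, nonneg, ?_, ?_⟩
  · -- cmi = 0 → CondIndep P
    intro hc0
    have hT1 : ∑ ω : ∀ i, X i, P ω * rat P A B C ω = 1 := by
      rw [hc0] at hlb
      linarith
    have hpt : ∀ ω, P ω * Real.log ((marg P (A ∪ B ∪ C) ω * marg P C ω)
        / (marg P (A ∪ C) ω * marg P (B ∪ C) ω)) = P ω * (1 - rat P A B C ω) := by
      have hz : ∑ ω : ∀ i, X i, (P ω * Real.log ((marg P (A ∪ B ∪ C) ω * marg P C ω)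
          / (marg P (A ∪ C) ω * marg P (B ∪ C) ω)) - P ω * (1 - rat P A B C ω)) = 0 := by
        rw [sum_sub_distrib, hsum1h, hT1]
        have hcmi : ∑ ω : ∀ i, X i, P ω * Real.log ((marg P (A ∪ B ∪ C) ω * marg P C ω)
            / (marg P (A ∪ C) ω * marg P (B ∪ C) ω)) = cmi P A B C := rfl
        rw [hcmi, hc0]
        ring
      have hall := (sum_eq_zero_iff_of_nonneg fun ω _ => sub_nonneg.2 (hptle ω)).1 hz
      exact fun ω => sub_eq_zero.1 (hall ω (mem_univ ω))
    have hmEq : ∀ ω, marg P (A ∪ B ∪ C) ω * rat P A B C ω = urat P A B C ω := by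
      have hsums : ∑ ω : ∀ i, X i, marg P (A ∪ B ∪ C) ω * rat P A B C ω
          = ∑ ω : ∀ i, X i, urat P A B C ω := by
        rw [hT, hT1, mul_one, hU]
      exact fun ω => (sum_eq_sum_iff_of_le fun ω _ => hle ω).1 hsums ω (mem_univ ω)
    intro ω hmC
    by_cases hABC0 : marg P (A ∪ B ∪ C) ω = 0
    · have h1 := hmEq ω
      rw [hABC0, zero_mul] at h1
      have h2 : marg P (A ∪ C) ω * marg P (B ∪ C) ω = 0 := by
        have h3 := h1.symm
        unfold urat at h3
        rcases div_eq_zero_iff.1 h3 with h | h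
        · exact h
        · exact absurd h (ne_of_gt hmC)
      rw [hABC0, zero_mul, h2]
    · have hABCpos : 0 < marg P (A ∪ B ∪ C) ω :=
        (marg_nonneg hP0 _ _).lt_of_ne (Ne.symm hABC0)
      rw [marg_eq_sum] at hABC0
      obtain ⟨τ, hτmem, hτne⟩ := Finset.exists_ne_zero_of_sum_ne_zero hABC0
      have hτpos : 0 < P τ := (hP0 τ).lt_of_ne (Ne.symm hτne)
      have pABC := posP (A ∪ B ∪ C) τ hτpos
      have pAC := posP (A ∪ C) τ hτpos
      have pBC := posP (B ∪ C) τ hτpos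
      have pC := posP C τ hτpos
      have hhτ : 0 < rat P A B C τ := div_pos (mul_pos pAC pBC) (mul_pos pABC pC)
      have heq := hpt τ
      have hgτ : (marg P (A ∪ B ∪ C) τ * marg P C τ)
          / (marg P (A ∪ C) τ * marg P (B ∪ C) τ) = (rat P A B C τ)⁻¹ := by
        unfold rat; rw [inv_div]
      rw [hgτ, Real.log_inv] at heq
      have hcancel : -Real.log (rat P A B C τ) = 1 - rat P A B C τ :=
        mul_left_cancel₀ (ne_of_gt hτpos) heq
      have hone : rat P A B C τ = 1 := by
        by_contra hne1
        have := Real.log_lt_sub_one_of_pos hhτ hne1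
        linarith
      have heq2 : marg P (A ∪ C) τ * marg P (B ∪ C) τ
          = marg P (A ∪ B ∪ C) τ * marg P C τ := by
        unfold rat at hone
        exact (div_eq_one_iff_eq (ne_of_gt (mul_pos pABC pC))).1 hone
      rw [marg_local (agr_mono sAC hτmem), marg_local (agr_mono sBC hτmem),
        marg_local (agr_mono sC hτmem), marg_local hτmem] at heq2
      exact heq2.symm
  · -- CondIndep P → cmi = 0
    intro hPCI
    rw [cmi]
    apply sum_eq_zero
    intro ω _
    rcases (hP0 ω).eq_or_lt with h0 | hpos
    · rw [← h0, zero_mul]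
    · have pAC := posP (A ∪ C) ω hpos
      have pBC := posP (B ∪ C) ω hpos
      rw [hPCI ω (posP C ω hpos), div_self (ne_of_gt (mul_pos pAC pBC)), Real.log_one,
        mul_zero]
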